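/- Let H be a bounded operator on ℓ²(ℤᵈ, ℂᴸ) satisfying the short-range condition ‖⟨n|H|m⟩‖ ≤ C/(1+|n−m|^α) for some α > d+2. Then H maps the domain of the position operator weight {ψ : Σ_n |n|²‖ψ_n‖² < ∞} into itself. -/

import Mathlib

/-- Euclidean norm of a lattice point `n ∈ ℤᵈ`. -/
noncomputable def zEucNorm {d : ℕ} (n : Fin d → ℤ) : ℝ :=
  Real.sqrt (∑ j, ((n j : ℝ)) ^ 2)

section Aux

noncomputable def zVec {d : ℕ} (n : Fin d → ℤ) : EuclideanSpace ℝ (Fin d) :=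
  (WithLp.equiv 2 (Fin d → ℝ)).symm (fun j => (n j : ℝ))

lemma zEucNorm_eq_norm {d : ℕ} (n : Fin d → ℤ) : zEucNorm n = ‖zVec n‖ := by
  rw [EuclideanSpace.norm_eq]
  simp [zEucNorm, zVec, sq_abs]

lemma zVec_sub {d : ℕ} (n m : Fin d → ℤ) : zVec (n - m) = zVec n - zVec m := by
  simp only [zVec]
  ext j
  simp [Pi.sub_apply]

lemma zEucNorm_nonneg {d : ℕ} (n : Fin d → ℤ) : 0 ≤ zEucNorm n :=
  Real.sqrt_nonneg _

lemma zEucNorm_triangle {d : ℕ} (n m : Fin d → ℤ) :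
    zEucNorm n ≤ zEucNorm (n - m) + zEucNorm m := by
  rw [zEucNorm_eq_norm, zEucNorm_eq_norm, zEucNorm_eq_norm]
  have h : zVec n = zVec (n - m) + zVec m := by
    rw [zVec_sub]
    abel
  rw [h]
  exact norm_add_le _ _

lemma abs_le_zEucNorm {d : ℕ} (n : Fin d → ℤ) (j : Fin d) : |(n j : ℝ)| ≤ zEucNorm n := by
  rw [zEucNorm, ← Real.sqrt_sq_eq_abs]
  apply Real.sqrt_le_sqrt
  exact Finset.single_le_sum (f := fun i => ((n i : ℝ)) ^ 2)
    (fun i _ => sq_nonneg _) (Finset.mem_univ j)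

lemma summable_unique' {γ : Type*} [AddCommMonoid γ] [TopologicalSpace γ]
    {ι : Type*} [Unique ι] (f : ι → γ) : Summable f :=
  (hasSum_single default fun b hb => (hb (Subsingleton.elim b default)).elim).summable

lemma summable_int_one_add_rpow {β : ℝ} (hβ : 1 < β) :
    Summable fun x : ℤ => (1 + |(x : ℝ)|) ^ (-β) := by
  apply Summable.of_norm_bounded_eventually (g := fun x : ℤ => |(x : ℝ)| ^ (-β))
    (Real.summable_abs_int_rpow hβ)
  filter_upwards [Filter.eventually_cofinite_ne (0 : ℤ)] with x hx
  have h0 : (0 : ℝ) < |(x : ℝ)| := abs_pos.mpr (by exact_mod_cast hx)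
  rw [Real.norm_eq_abs, abs_of_nonneg (Real.rpow_nonneg (by positivity) _)]
  exact Real.rpow_le_rpow_of_nonpos h0 (by linarith) (by linarith)

lemma summable_pi_prod {β : ℝ} (hβ : 1 < β) (d : ℕ) :
    Summable fun n : Fin d → ℤ => ∏ j, (1 + |(n j : ℝ)|) ^ (-β) := by
  induction d with
  | zero => exact summable_unique' _
  | succ d ih =>
      rw [← (Fin.consEquiv (fun _ : Fin (d + 1) => ℤ)).summable_iff]
      have hmul := Summable.mul_of_nonneg (summable_int_one_add_rpow hβ) ih
        (fun x => Real.rpow_nonneg (by positivity) _)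
        (fun n => Finset.prod_nonneg fun j _ => Real.rpow_nonneg (by positivity) _)
      apply hmul.congr
      intro p
      show (1 + |(p.1 : ℝ)|) ^ (-β) * ∏ j, (1 + |(p.2 j : ℝ)|) ^ (-β)
          = ∏ j, (1 + |((Fin.cons p.1 p.2 : ∀ _ : Fin (d+1), ℤ) j : ℝ)|) ^ (-β)
      rw [Fin.prod_univ_succ]
      simp

/-- Summability of the short-range weight `(1+|k|)/(1+|k|^α)` over `ℤᵈ` for `α > d+1`. -/
lemma summable_shortRange_weight {d : ℕ} {α : ℝ} (hα : (d : ℝ) + 1 < α) :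
    Summable fun k : Fin d → ℤ => (1 + zEucNorm k) / (1 + zEucNorm k ^ α) := by
  rcases Nat.eq_zero_or_pos d with hd | hd
  · subst hd
    exact summable_unique' _
  · have hd' : (0 : ℝ) < d := by exact_mod_cast hd
    set β := (α - 1) / d with hβdef
    have hβ : 1 < β := by
      rw [hβdef, lt_div_iff₀ hd']
      linarith
    refine Summable.of_nonneg_of_le (fun k => ?_) (fun k => ?_)
      ((summable_pi_prod hβ d).mul_left ((2 : ℝ) ^ α))
    · have h1 : (0 : ℝ) < 1 + zEucNorm k ^ α := by
        have := Real.rpow_nonneg (zEucNorm_nonneg k) α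
        linarith
      have h2 : (0 : ℝ) ≤ 1 + zEucNorm k := by linarith [zEucNorm_nonneg k]
      positivity
    · set t := zEucNorm k with ht
      have ht0 : 0 ≤ t := zEucNorm_nonneg k
      have hα0 : (0 : ℝ) ≤ α := by linarith [Nat.cast_nonneg (α := ℝ) d]
      have hden : (0 : ℝ) < 1 + t ^ α := by
        have := Real.rpow_nonneg ht0 α
        linarith
      have h1t : (0 : ℝ) < 1 + t := by linarith
      -- step 1 : (1+t)/(1+t^α) ≤ 2^α * (1+t)^(1-α)
      have step1 : (1 + t) / (1 + t ^ α) ≤ 2 ^ α * (1 + t) ^ (1 - α) := by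
        have hpow : (1 + t) ^ α ≤ 2 ^ α * (1 + t ^ α) := by
          have hle : 1 + t ≤ 2 * max 1 t := by
            rcases le_total t 1 with h | h
            · have : max 1 t = 1 := max_eq_left h
              rw [this]; linarith
            · have : max 1 t = t := max_eq_right h
              rw [this]; linarith
          have hmax0 : (0 : ℝ) < max 1 t := lt_of_lt_of_le one_pos (le_max_left _ _)
          have h2 : (1 + t) ^ α ≤ (2 * max 1 t) ^ α :=
            Real.rpow_le_rpow h1t.le hle hα0
          have h3 : (2 * max 1 t) ^ α = 2 ^ α * (max 1 t) ^ α :=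
            Real.mul_rpow (by norm_num) hmax0.le
          have h4 : (max 1 t) ^ α ≤ 1 + t ^ α := by
            rcases le_total t 1 with h | h
            · rw [max_eq_left h, Real.one_rpow]
              have := Real.rpow_nonneg ht0 α
              linarith
            · rw [max_eq_right h]
              have := Real.rpow_nonneg ht0 α
              linarith [Real.rpow_nonneg ht0 α]
          calc (1 + t) ^ α ≤ 2 ^ α * (max 1 t) ^ α := by rw [← h3]; exact h2
          _ ≤ 2 ^ α * (1 + t ^ α) := by
              have h2α : (0 : ℝ) ≤ 2 ^ α := Real.rpow_nonneg (by norm_num) α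
              exact mul_le_mul_of_nonneg_left h4 h2α
        have hrw : (1 + t) ^ (1 - α) = (1 + t) / (1 + t) ^ α := by
          rw [Real.rpow_sub h1t, Real.rpow_one]
        rw [hrw, ← mul_div_assoc]
        rw [div_le_div_iff₀ hden (Real.rpow_pos_of_pos h1t α)]
        calc (1 + t) * (1 + t) ^ α ≤ (1 + t) * (2 ^ α * (1 + t ^ α)) :=
              mul_le_mul_of_nonneg_left hpow h1t.le
        _ = 2 ^ α * (1 + t) * (1 + t ^ α) := by ring
      -- step 2 : (1+t)^(1-α) ≤ ∏ j, (1+|k j|)^(-β)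
      have step2 : (1 + t) ^ (1 - α) ≤ ∏ j, (1 + |(k j : ℝ)|) ^ (-β) := by
        have hQ : ∀ j : Fin d, (1 : ℝ) ≤ 1 + |(k j : ℝ)| := fun j => by
          have := abs_nonneg ((k j : ℝ)); linarith
        have hQle : ∀ j : Fin d, 1 + |(k j : ℝ)| ≤ 1 + t := fun j => by
          have := abs_le_zEucNorm k j; linarith
        have hprod_pos : (0 : ℝ) < ∏ j, (1 + |(k j : ℝ)|) :=
          Finset.prod_pos fun j _ => lt_of_lt_of_le one_pos (hQ j)
        have hprod_le : ∏ j, (1 + |(k j : ℝ)|) ≤ (1 + t) ^ (d : ℕ) := by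
          calc ∏ j, (1 + |(k j : ℝ)|) ≤ ∏ _j : Fin d, (1 + t) :=
                Finset.prod_le_prod (fun j _ => by linarith [hQ j]) (fun j _ => hQle j)
          _ = (1 + t) ^ (d : ℕ) := by
              rw [Finset.prod_const, Finset.card_univ, Fintype.card_fin]
        have heq : ∏ j, (1 + |(k j : ℝ)|) ^ (-β) = (∏ j, (1 + |(k j : ℝ)|)) ^ (-β) :=
          Real.finset_prod_rpow _ _ (fun j _ => by linarith [hQ j]) _
        rw [heq]
        have h5 : ((1 + t) ^ (d : ℕ)) ^ (-β) ≤ (∏ j, (1 + |(k j : ℝ)|)) ^ (-β) :=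
          Real.rpow_le_rpow_of_nonpos hprod_pos hprod_le (by linarith)
        have h6 : ((1 + t) ^ (d : ℕ)) ^ (-β) = (1 + t) ^ (1 - α) := by
          rw [← Real.rpow_natCast (1 + t) d, ← Real.rpow_mul h1t.le]
          have hda : (d : ℝ) * -β = 1 - α := by
            rw [hβdef]
            field_simp
            ring
          rw [hda]
        rw [← h6]
        exact h5
      calc (1 + t) / (1 + t ^ α) ≤ 2 ^ α * (1 + t) ^ (1 - α) := step1
      _ ≤ 2 ^ α * ∏ j, (1 + |(k j : ℝ)|) ^ (-β) := by
          have h2α : (0 : ℝ) ≤ 2 ^ α := Real.rpow_nonneg (by norm_num) α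
          exact mul_le_mul_of_nonneg_left step2 h2α

/-- Convolution of an `ℓ¹` weight with an `ℓ²`-type sequence is summable pointwise. -/
lemma summable_conv {ι : Type*} [AddCommGroup ι] {g u : ι → ℝ}
    (hg0 : ∀ k, 0 ≤ g k) (hg : Summable g)
    (hu0 : ∀ m, 0 ≤ u m) (hu : Summable fun m => u m ^ 2) (n : ι) :
    Summable fun m => g (n - m) * u m := by
  have hS0 : (0 : ℝ) ≤ ∑' k, g k := tsum_nonneg hg0
  have hgS : ∀ k, g k ≤ ∑' k, g k := fun k => Summable.le_tsum hg k fun j _ => hg0 j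
  have hshift : Summable fun m => g (n - m) := (Equiv.subLeft n).summable_iff.mpr hg
  have hgu2 : Summable fun m => g (n - m) * u m ^ 2 := by
    refine Summable.of_nonneg_of_le (fun m => mul_nonneg (hg0 _) (sq_nonneg _))
      (fun m => ?_) (hu.mul_left (∑' k, g k))
    exact mul_le_mul_of_nonneg_right (hgS _) (sq_nonneg _)
  refine Summable.of_nonneg_of_le (fun m => mul_nonneg (hg0 _) (hu0 _))
    (fun m => ?_) (hshift.add hgu2)
  have h1 : u m ≤ 1 + u m ^ 2 := by nlinarith [sq_nonneg (u m - 1), hu0 m]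
  calc g (n - m) * u m ≤ g (n - m) * (1 + u m ^ 2) :=
        mul_le_mul_of_nonneg_left h1 (hg0 _)
  _ = g (n - m) + g (n - m) * u m ^ 2 := by ring

set_option maxHeartbeats 1000000 in
/-- Weighted Schur-test style summability: if `w n ≤ (g * u) n` with `g ∈ ℓ¹` nonnegative
and `u ∈ ℓ²` nonnegative, then `w ∈ ℓ²`. -/
lemma schur_summable {ι : Type*} [AddCommGroup ι] {g u w : ι → ℝ}
    (hg0 : ∀ k, 0 ≤ g k) (hg : Summable g)
    (hu0 : ∀ m, 0 ≤ u m) (hu : Summable fun m => u m ^ 2)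
    (hw0 : ∀ n, 0 ≤ w n) (hw : ∀ n, w n ≤ ∑' m, g (n - m) * u m) :
    Summable fun n => w n ^ 2 := by
  set S := ∑' k, g k with hS
  have hS0 : (0 : ℝ) ≤ S := tsum_nonneg hg0
  have hgS : ∀ k, g k ≤ S := fun k => Summable.le_tsum hg k fun j _ => hg0 j
  have hshift : ∀ n : ι, Summable fun m => g (n - m) :=
    fun n => (Equiv.subLeft n).summable_iff.mpr hg
  have hshift_sum : ∀ n : ι, ∑' m, g (n - m) = S := fun n => (Equiv.subLeft n).tsum_eq g
  have hshift' : ∀ m : ι, Summable fun n => g (n - m) :=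
    fun m => (Equiv.subRight m).summable_iff.mpr hg
  have hshift_sum' : ∀ m : ι, ∑' n, g (n - m) = S := fun m => (Equiv.subRight m).tsum_eq g
  have hgu2 : ∀ n, Summable fun m => g (n - m) * u m ^ 2 := by
    intro n
    refine Summable.of_nonneg_of_le (fun m => mul_nonneg (hg0 _) (sq_nonneg _))
      (fun m => ?_) (hu.mul_left S)
    exact mul_le_mul_of_nonneg_right (hgS _) (sq_nonneg _)
  have hgu : ∀ n, Summable fun m => g (n - m) * u m := fun n => summable_conv hg0 hg hu0 hu n
  have hR0 : ∀ n, (0 : ℝ) ≤ ∑' m, g (n - m) * u m ^ 2 :=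
    fun n => tsum_nonneg fun m => mul_nonneg (hg0 _) (sq_nonneg _)
  have hCS : ∀ n, (∑' m, g (n - m) * u m) ^ 2 ≤ S * ∑' m, g (n - m) * u m ^ 2 := by
    intro n
    have key : ∑' m, g (n - m) * u m
        ≤ Real.sqrt S * Real.sqrt (∑' m, g (n - m) * u m ^ 2) := by
      refine Summable.tsum_le_of_sum_le (hgu n) (fun F => ?_)
      have h1 : ∀ m, g (n - m) * u m
          = Real.sqrt (g (n - m)) * Real.sqrt (g (n - m) * u m ^ 2) := by
        intro m
        rw [← Real.sqrt_mul (hg0 _)]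
        have h2 : g (n - m) * (g (n - m) * u m ^ 2) = (g (n - m) * u m) ^ 2 := by ring
        rw [h2, Real.sqrt_sq (mul_nonneg (hg0 _) (hu0 _))]
      calc ∑ m ∈ F, g (n - m) * u m
          = ∑ m ∈ F, Real.sqrt (g (n - m)) * Real.sqrt (g (n - m) * u m ^ 2) :=
            Finset.sum_congr rfl fun m _ => h1 m
      _ ≤ Real.sqrt (∑ m ∈ F, g (n - m)) * Real.sqrt (∑ m ∈ F, g (n - m) * u m ^ 2) :=
            Real.sum_sqrt_mul_sqrt_le F (fun m => hg0 _)
              (fun m => mul_nonneg (hg0 _) (sq_nonneg _))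
      _ ≤ Real.sqrt S * Real.sqrt (∑' m, g (n - m) * u m ^ 2) := by
            have hA : ∑ m ∈ F, g (n - m) ≤ S := by
              rw [← hshift_sum n]
              exact Summable.sum_le_tsum F (fun m _ => hg0 _) (hshift n)
            have hB : ∑ m ∈ F, g (n - m) * u m ^ 2 ≤ ∑' m, g (n - m) * u m ^ 2 :=
              Summable.sum_le_tsum F (fun m _ => mul_nonneg (hg0 _) (sq_nonneg _)) (hgu2 n)
            exact mul_le_mul (Real.sqrt_le_sqrt hA) (Real.sqrt_le_sqrt hB)
              (Real.sqrt_nonneg _) (Real.sqrt_nonneg _)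
    have h0 : (0 : ℝ) ≤ ∑' m, g (n - m) * u m :=
      tsum_nonneg fun m => mul_nonneg (hg0 _) (hu0 _)
    calc (∑' m, g (n - m) * u m) ^ 2
        ≤ (Real.sqrt S * Real.sqrt (∑' m, g (n - m) * u m ^ 2)) ^ 2 :=
          pow_le_pow_left₀ h0 key 2
    _ = S * ∑' m, g (n - m) * u m ^ 2 := by
          rw [mul_pow, Real.sq_sqrt hS0, Real.sq_sqrt (hR0 n)]
  -- summability of n ↦ ∑' m, g (n - m) * u m ^ 2
  have hG : Summable fun p : ι × ι => g (p.2 - p.1) * u p.1 ^ 2 := by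
    refine (summable_prod_of_nonneg (fun p => mul_nonneg (hg0 _) (sq_nonneg _))).2
      ⟨fun m => ?_, ?_⟩
    · show Summable fun n : ι => g (n - m) * u m ^ 2
      exact (hshift' m).mul_right _
    · show Summable fun m : ι => ∑' n : ι, g (n - m) * u m ^ 2
      refine ((hu.mul_left S).congr ?_)
      intro m
      rw [tsum_mul_right, hshift_sum' m]
  have hF : Summable fun p : ι × ι => g (p.1 - p.2) * u p.2 ^ 2 := hG.prod_symm
  have hRsum : Summable fun n => ∑' m, g (n - m) * u m ^ 2 :=
    ((summable_prod_of_nonneg (fun p => mul_nonneg (hg0 _) (sq_nonneg _))).1 hF).2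
  refine Summable.of_nonneg_of_le (fun n => sq_nonneg _) (fun n => ?_) (hRsum.mul_left S)
  calc w n ^ 2 ≤ (∑' m, g (n - m) * u m) ^ 2 := pow_le_pow_left₀ (hw0 n) (hw n) 2
  _ ≤ S * ∑' m, g (n - m) * u m ^ 2 := hCS n

/-- Evaluation at a point as a continuous linear map on `ℓ²`. -/
noncomputable def lpEval {d L : ℕ} (n : Fin d → ℤ) :
    lp (fun _ : Fin d → ℤ => EuclideanSpace ℂ (Fin L)) 2 →L[ℂ] EuclideanSpace ℂ (Fin L) :=
  LinearMap.mkContinuous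
    { toFun := fun f => (f : ∀ _ : Fin d → ℤ, EuclideanSpace ℂ (Fin L)) n
      map_add' := fun f g => congrFun (lp.coeFn_add f g) n
      map_smul' := fun c f => congrFun (lp.coeFn_smul c f) n }
    1 (fun f => by
      simpa using lp.norm_apply_le_norm (by norm_num : (2 : ENNReal) ≠ 0) f n)

lemma lpEval_apply {d L : ℕ} (n : Fin d → ℤ)
    (f : lp (fun _ : Fin d → ℤ => EuclideanSpace ℂ (Fin L)) 2) :
    lpEval n f = (f : ∀ _ : Fin d → ℤ, EuclideanSpace ℂ (Fin L)) n := rfl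

end Aux

set_option maxHeartbeats 1000000 in
/-- A bounded operator `H` on `ℓ²(ℤᵈ, ℂᴸ)` whose matrix blocks satisfy the
short-range condition `‖⟨n|H|m⟩‖ ≤ C/(1+|n−m|^α)` with `α > d+2` maps the domain
`{ψ : Σ_n |n|²‖ψ_n‖² < ∞}` of the position operator weight into itself. -/
theorem shortRange_preserves_position_domain {d L : ℕ} (C α : ℝ) (hα : (d : ℝ) + 2 < α)
    (H : lp (fun _ : Fin d → ℤ => EuclideanSpace ℂ (Fin L)) 2 →L[ℂ]
         lp (fun _ : Fin d → ℤ => EuclideanSpace ℂ (Fin L)) 2)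
    (hshort : ∀ n m : Fin d → ℤ, ∀ v : EuclideanSpace ℂ (Fin L),
        ‖(H (lp.single 2 m v) : ∀ _ : Fin d → ℤ, EuclideanSpace ℂ (Fin L)) n‖ ≤
          C / (1 + zEucNorm (n - m) ^ α) * ‖v‖)
    (ψ : lp (fun _ : Fin d → ℤ => EuclideanSpace ℂ (Fin L)) 2)
    (hψ : Summable fun n : Fin d → ℤ =>
        zEucNorm n ^ 2 * ‖(ψ : ∀ _ : Fin d → ℤ, EuclideanSpace ℂ (Fin L)) n‖ ^ 2) :
    Summable fun n : Fin d → ℤ =>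
        zEucNorm n ^ 2 * ‖(H ψ : ∀ _ : Fin d → ℤ, EuclideanSpace ℂ (Fin L)) n‖ ^ 2 := by
  classical
  set c : ℝ := max C 0 with hc_def
  have hc : 0 ≤ c := le_max_right _ _
  -- the ℓ¹ weight
  set G : (Fin d → ℤ) → ℝ := fun k => c * ((1 + zEucNorm k) / (1 + zEucNorm k ^ α))
    with hG_def
  have hden : ∀ k : Fin d → ℤ, (0 : ℝ) < 1 + zEucNorm k ^ α := fun k => by
    have := Real.rpow_nonneg (zEucNorm_nonneg k) α
    linarith
  have hG0 : ∀ k, 0 ≤ G k := fun k =>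
    mul_nonneg hc (div_nonneg (by linarith [zEucNorm_nonneg k]) (hden k).le)
  have hGsum : Summable G :=
    (summable_shortRange_weight (by linarith : (d : ℝ) + 1 < α)).mul_left c
  -- the ℓ² data
  set u : (Fin d → ℤ) → ℝ := fun m =>
    (1 + zEucNorm m) * ‖(ψ : ∀ _ : Fin d → ℤ, EuclideanSpace ℂ (Fin L)) m‖ with hu_def
  have hu0 : ∀ m, 0 ≤ u m := fun m =>
    mul_nonneg (by linarith [zEucNorm_nonneg m]) (norm_nonneg _)
  have hψ2 : Summable fun m : Fin d → ℤ =>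
      ‖(ψ : ∀ _ : Fin d → ℤ, EuclideanSpace ℂ (Fin L)) m‖ ^ 2 := by
    have h := (lp.hasSum_norm (p := 2) (by norm_num) ψ).summable
    refine h.congr fun m => ?_
    rw [show ((2 : ENNReal)).toReal = ((2 : ℕ) : ℝ) by norm_num, Real.rpow_natCast]
  have hu2 : Summable fun m => u m ^ 2 := by
    refine Summable.of_nonneg_of_le (fun m => sq_nonneg _) (fun m => ?_)
      ((hψ2.mul_left 2).add (hψ.mul_left 2))
    have h1 : 0 ≤ zEucNorm m := zEucNorm_nonneg m
    have h2 : 0 ≤ ‖(ψ : ∀ _ : Fin d → ℤ, EuclideanSpace ℂ (Fin L)) m‖ := norm_nonneg _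
    simp only [hu_def]
    nlinarith [sq_nonneg ((1 - zEucNorm m) *
      ‖(ψ : ∀ _ : Fin d → ℤ, EuclideanSpace ℂ (Fin L)) m‖)]
  -- kernel bound with nonnegative constant
  have hK : ∀ n m : Fin d → ℤ, ∀ v : EuclideanSpace ℂ (Fin L),
      ‖(H (lp.single 2 m v) : ∀ _ : Fin d → ℤ, EuclideanSpace ℂ (Fin L)) n‖ ≤
        c / (1 + zEucNorm (n - m) ^ α) * ‖v‖ := by
    intro n m v
    refine (hshort n m v).trans ?_
    have h1 : C / (1 + zEucNorm (n - m) ^ α) ≤ c / (1 + zEucNorm (n - m) ^ α) :=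
      (div_le_div_iff_of_pos_right (hden _)).mpr (le_max_left C 0)
    exact mul_le_mul_of_nonneg_right h1 (norm_nonneg v)
  -- pointwise expansion of `H ψ` over single-site contributions
  have hexp : ∀ n : Fin d → ℤ,
      HasSum (fun m : Fin d → ℤ =>
          (H (lp.single 2 m ((ψ : ∀ _ : Fin d → ℤ, EuclideanSpace ℂ (Fin L)) m)) :
            ∀ _ : Fin d → ℤ, EuclideanSpace ℂ (Fin L)) n)
        ((H ψ : ∀ _ : Fin d → ℤ, EuclideanSpace ℂ (Fin L)) n) := by
    intro n
    have h1 : HasSum (fun m : Fin d → ℤ =>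
        lp.single 2 m ((ψ : ∀ _ : Fin d → ℤ, EuclideanSpace ℂ (Fin L)) m)) ψ :=
      lp.hasSum_single (by norm_num) ψ
    have h2 := H.hasSum h1
    exact (lpEval n).hasSum h2
  -- pointwise domination of the single-site bounds by `G * u`
  have hKb : ∀ n m : Fin d → ℤ,
      c / (1 + zEucNorm (n - m) ^ α) *
          ‖(ψ : ∀ _ : Fin d → ℤ, EuclideanSpace ℂ (Fin L)) m‖ ≤ G (n - m) * u m := by
    intro n m
    have h1 : c / (1 + zEucNorm (n - m) ^ α) ≤ G (n - m) := by
      simp only [hG_def]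
      have : c / (1 + zEucNorm (n - m) ^ α) ≤ c * (1 + zEucNorm (n - m)) /
          (1 + zEucNorm (n - m) ^ α) := by
        refine (div_le_div_iff_of_pos_right (hden _)).mpr ?_
        nlinarith [mul_nonneg hc (zEucNorm_nonneg (n - m))]
      calc c / (1 + zEucNorm (n - m) ^ α)
          ≤ c * (1 + zEucNorm (n - m)) / (1 + zEucNorm (n - m) ^ α) := this
      _ = c * ((1 + zEucNorm (n - m)) / (1 + zEucNorm (n - m) ^ α)) := by ring
    have h2 : ‖(ψ : ∀ _ : Fin d → ℤ, EuclideanSpace ℂ (Fin L)) m‖ ≤ u m := by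
      simp only [hu_def]
      nlinarith [zEucNorm_nonneg m, norm_nonneg ((ψ : ∀ _ : Fin d → ℤ,
        EuclideanSpace ℂ (Fin L)) m)]
    exact mul_le_mul h1 h2 (norm_nonneg _) (hG0 _)
  have hb_sum : ∀ n : Fin d → ℤ, Summable fun m : Fin d → ℤ =>
      c / (1 + zEucNorm (n - m) ^ α) *
        ‖(ψ : ∀ _ : Fin d → ℤ, EuclideanSpace ℂ (Fin L)) m‖ := by
    intro n
    exact Summable.of_nonneg_of_le
      (fun m => mul_nonneg (div_nonneg hc (hden _).le) (norm_nonneg _))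
      (hKb n) (summable_conv hG0 hGsum hu0 hu2 n)
  -- the basic pointwise bound
  have hbound : ∀ n : Fin d → ℤ,
      ‖(H ψ : ∀ _ : Fin d → ℤ, EuclideanSpace ℂ (Fin L)) n‖ ≤
        ∑' m : Fin d → ℤ, c / (1 + zEucNorm (n - m) ^ α) *
          ‖(ψ : ∀ _ : Fin d → ℤ, EuclideanSpace ℂ (Fin L)) m‖ := by
    intro n
    have hsn : Summable fun m : Fin d → ℤ =>
        ‖(H (lp.single 2 m ((ψ : ∀ _ : Fin d → ℤ, EuclideanSpace ℂ (Fin L)) m)) :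
            ∀ _ : Fin d → ℤ, EuclideanSpace ℂ (Fin L)) n‖ :=
      Summable.of_nonneg_of_le (fun m => norm_nonneg _) (fun m => hK n m _) (hb_sum n)
    rw [← (hexp n).tsum_eq]
    exact (norm_tsum_le_tsum_norm hsn).trans
      (Summable.tsum_le_tsum (fun m => hK n m _) hsn (hb_sum n))
  -- the weighted pointwise bound
  have hw : ∀ n : Fin d → ℤ,
      zEucNorm n * ‖(H ψ : ∀ _ : Fin d → ℤ, EuclideanSpace ℂ (Fin L)) n‖ ≤
        ∑' m : Fin d → ℤ, G (n - m) * u m := by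
    intro n
    have h1 : zEucNorm n * ‖(H ψ : ∀ _ : Fin d → ℤ, EuclideanSpace ℂ (Fin L)) n‖ ≤
        zEucNorm n * ∑' m : Fin d → ℤ, c / (1 + zEucNorm (n - m) ^ α) *
          ‖(ψ : ∀ _ : Fin d → ℤ, EuclideanSpace ℂ (Fin L)) m‖ :=
      mul_le_mul_of_nonneg_left (hbound n) (zEucNorm_nonneg n)
    rw [← tsum_mul_left] at h1
    refine h1.trans (Summable.tsum_le_tsum (fun m => ?_) ((hb_sum n).mul_left _)
      (summable_conv hG0 hGsum hu0 hu2 n))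
    have htri : zEucNorm n ≤ (1 + zEucNorm (n - m)) * (1 + zEucNorm m) := by
      have h := zEucNorm_triangle n m
      nlinarith [zEucNorm_nonneg (n - m), zEucNorm_nonneg m]
    calc zEucNorm n * (c / (1 + zEucNorm (n - m) ^ α) *
          ‖(ψ : ∀ _ : Fin d → ℤ, EuclideanSpace ℂ (Fin L)) m‖)
        ≤ ((1 + zEucNorm (n - m)) * (1 + zEucNorm m)) * (c / (1 + zEucNorm (n - m) ^ α) *
          ‖(ψ : ∀ _ : Fin d → ℤ, EuclideanSpace ℂ (Fin L)) m‖) :=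
          mul_le_mul_of_nonneg_right htri
            (mul_nonneg (div_nonneg hc (hden _).le) (norm_nonneg _))
    _ = G (n - m) * u m := by
          simp only [hG_def, hu_def]
          ring
  -- conclude with the Schur-type lemma
  have hmain := schur_summable hG0 hGsum hu0 hu2
    (fun n => mul_nonneg (zEucNorm_nonneg n) (norm_nonneg _)) hw
  refine hmain.congr fun n => ?_
  rw [mul_pow]
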